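/- Let k be a non-negative integer and let P be a finite propositional logic program such that every atom occurring negated in P is the head of some rule of P (Neg(P) ⊆ h(P)). Let P^k be the program consisting of all rules r of P with |b⁻(r)| ≤ k. If M is a stable model of P^k with |M| ≥ |P| − k, then the number of distinct atoms occurring negated in the bodies of rules of P^k is at most k + k². -/
import Mathlib


open scoped Classical

noncomputable section

/-- A propositional logic program rule: a head atom, a finite positive body and a
finite negative body. -/
structure LPRule (α : Type) where
  head : α
  pos : Finset α
  neg : Finset α
deriving DecidableEq

/-- A logic program is a finite set of rules. -/
abbrev LProgram (α : Type) := Finset (LPRule α)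

variable {α : Type} [DecidableEq α]

/-- `horn r`: the Horn rule with the same head and positive body as `r`
and empty negative body. -/
def LPRule.horn (r : LPRule α) : LPRule α := ⟨r.head, r.pos, ∅⟩

/-- A rule `r` is proper if `h(r) ∉ b⁺(r)` and `b⁺(r) ∩ b⁻(r) = ∅`. -/
def LPRule.proper (r : LPRule α) : Prop := r.head ∉ r.pos ∧ r.pos ∩ r.neg = ∅

/-- `At(P)`: the set of atoms occurring in `P`. -/
def atomsP (P : LProgram α) : Finset α := P.sup (fun r => insert r.head (r.pos ∪ r.neg))

/-- `h(P)`: the set of heads of rules of `P`. -/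
def headsP (P : LProgram α) : Finset α := P.image LPRule.head

/-- `Neg(P)`: the set of atoms occurring negated in `P`. -/
def negP (P : LProgram α) : Finset α := P.sup LPRule.neg

/-- The least model of a (Horn) program `Q`, given as a set of rules (negative bodies
are ignored; Horn rules have empty negative bodies): the least set `M` of atoms such
that `h(r) ∈ M` whenever `r ∈ Q` and `b⁺(r) ⊆ M`. -/
def LM (Q : Set (LPRule α)) : Set α :=
  ⋂₀ {M : Set α | ∀ r ∈ Q, (↑r.pos : Set α) ⊆ M → r.head ∈ M}

/-- The reduct `P^S`: delete every rule whose negative body meets `S` and remove the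
negative bodies of the remaining rules. -/
def reduct (P : LProgram α) (S : Set α) : Set (LPRule α) :=
  LPRule.horn '' {r | r ∈ P ∧ (↑r.neg : Set α) ∩ S = ∅}

/-- `M` is a stable model of `P` if `M = LM (P^M)`. -/
def isStable (P : LProgram α) (M : Set α) : Prop :=
  M = LM (reduct P M)

/-- if every atom occurring negated in `P` is the head of some rule of `P`,
`P^k` consists of the rules of `P` with at most `k` negated atoms in the body, and `M`
is a stable model of `P^k` with `|M| ≥ |P| - k`, then the number of distinct atoms
occurring negated in `P^k` is at most `k + k²`. -/
theorem card_negAtoms_le (k : ℕ) (P : LProgram α)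
    (hneg : negP P ⊆ headsP P)
    (M : Finset α)
    (hstable : isStable (P.filter (fun r => r.neg.card ≤ k)) ↑M)
    (hcard : P.card ≤ M.card + k) :
    (negP (P.filter (fun r => r.neg.card ≤ k))).card ≤ k + k ^ 2 := by
  classical
  set Pk := P.filter (fun r => r.neg.card ≤ k) with hPkdef
  -- every element of M is the head of a rule of Pk whose negative body avoids M
  have hM : ∀ m ∈ M, ∃ r ∈ Pk, (↑r.neg : Set α) ∩ ↑M = ∅ ∧ r.head = m := by
    intro m hm
    have hm' : (m : α) ∈ LM (reduct Pk ↑M) := by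
      rw [← hstable]; exact_mod_cast hm
    exact Set.mem_sInter.mp hm'
      {a | ∃ r ∈ Pk, (↑r.neg : Set α) ∩ ↑M = ∅ ∧ r.head = a}
      (by
        rintro r ⟨s, ⟨hs1, hs2⟩, rfl⟩ _
        exact ⟨s, hs1, hs2, rfl⟩)
  set G := Pk.filter (fun r => (↑r.neg : Set α) ∩ ↑M = ∅) with hGdef
  set B := Pk.filter (fun r => ¬ ((↑r.neg : Set α) ∩ ↑M = ∅)) with hBdef
  have hMG : M ⊆ G.image LPRule.head := by
    intro m hm
    obtain ⟨r, hr, hdisj, hh⟩ := hM m hm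
    exact Finset.mem_image.mpr ⟨r, Finset.mem_filter.mpr ⟨hr, hdisj⟩, hh⟩
  have hMGcard : M.card ≤ G.card :=
    le_trans (Finset.card_le_card hMG) (Finset.card_image_le)
  have hGB : G.card + B.card = Pk.card := Finset.card_filter_add_card_filter_not _
  have hPkP : Pk.card ≤ P.card := Finset.card_le_card (Finset.filter_subset _ _)
  have hBk : B.card ≤ k := by omega
  -- rules with head not in M
  set C := P.filter (fun r => r.head ∉ M) with hCdef
  set D := P.filter (fun r => r.head ∈ M) with hDdef
  have hMD : M ⊆ D.image LPRule.head := by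
    intro m hm
    obtain ⟨r, hr, _, hh⟩ := hM m hm
    have hrP : r ∈ P := Finset.mem_of_mem_filter r hr
    exact Finset.mem_image.mpr ⟨r, Finset.mem_filter.mpr ⟨hrP, hh ▸ hm⟩, hh⟩
  have hMDcard : M.card ≤ D.card :=
    le_trans (Finset.card_le_card hMD) (Finset.card_image_le)
  have hCD : D.card + C.card = P.card := Finset.card_filter_add_card_filter_not _
  have hCk : C.card ≤ k := by omega
  set N := negP Pk with hNdef
  have hsplit : (N \ M).card + (N ∩ M).card = N.card := Finset.card_sdiff_add_card_inter N M
  -- N ∩ M ⊆ union of negative bodies of B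
  have h1 : N ∩ M ⊆ B.sup LPRule.neg := by
    intro a ha
    obtain ⟨haN, haM⟩ := Finset.mem_inter.mp ha
    obtain ⟨r, hr, har⟩ := Finset.mem_sup.mp haN
    have hrB : r ∈ B := by
      refine Finset.mem_filter.mpr ⟨hr, ?_⟩
      intro hdisj
      have : a ∈ (↑r.neg : Set α) ∩ ↑M := ⟨har, haM⟩
      rw [hdisj] at this
      exact this
    exact Finset.mem_sup.mpr ⟨r, hrB, har⟩
  have h1card : (N ∩ M).card ≤ k * k := by
    calc (N ∩ M).card ≤ (B.sup LPRule.neg).card := Finset.card_le_card h1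
      _ = (B.biUnion LPRule.neg).card := by rw [Finset.sup_eq_biUnion]
      _ ≤ ∑ r ∈ B, r.neg.card := Finset.card_biUnion_le
      _ ≤ ∑ _r ∈ B, k := by
          refine Finset.sum_le_sum ?_
          intro r hr
          have : r ∈ Pk := Finset.mem_of_mem_filter r hr
          exact (Finset.mem_filter.mp this).2
      _ = B.card * k := by rw [Finset.sum_const, smul_eq_mul]
      _ ≤ k * k := Nat.mul_le_mul_right k hBk
  -- N \ M ⊆ heads of C
  have h2 : N \ M ⊆ C.image LPRule.head := by
    intro a ha
    obtain ⟨haN, haM⟩ := Finset.mem_sdiff.mp ha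
    have haNP : a ∈ negP P := by
      obtain ⟨r, hr, har⟩ := Finset.mem_sup.mp haN
      exact Finset.mem_sup.mpr ⟨r, Finset.mem_of_mem_filter r hr, har⟩
    obtain ⟨r, hrP, hh⟩ := Finset.mem_image.mp (hneg haNP)
    exact Finset.mem_image.mpr ⟨r, Finset.mem_filter.mpr ⟨hrP, hh ▸ haM⟩, hh⟩
  have h2card : (N \ M).card ≤ k :=
    le_trans (le_trans (Finset.card_le_card h2) Finset.card_image_le) hCk
  have : k ^ 2 = k * k := sq k
  omega
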